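/- Let ω : ℝ≥0 → ℝ≥0 be a nonnegative function, and let α, T, t₀, K₀ > 0 be constants such that for all t ≥ t₀, max(ω(t)^(1+α), ω(t+T)^(1+α)) ≤ K₀·(ω(t) − ω(t+T)). Then for all t ≥ t₀, ω(t+T)^(−α) − ω(t)^(−α) ≥ α/K₀ (where we interpret the conclusion under the assumption ω(t), ω(t+T) > 0). -/

import Mathlib

theorem stmt_0 (ω : ℝ → ℝ) (hω : ∀ t ≥ (0:ℝ), 0 ≤ ω t)
    (α T t₀ K₀ : ℝ) (hα : 0 < α) (hT : 0 < T) (ht₀ : 0 < t₀) (hK₀ : 0 < K₀)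
    (hdiff : ∀ t ≥ t₀, max ((ω t) ^ (1 + α)) ((ω (t + T)) ^ (1 + α))
        ≤ K₀ * (ω t - ω (t + T)))
    (t : ℝ) (ht : t₀ ≤ t) (h₁ : 0 < ω t) (h₂ : 0 < ω (t + T)) :
    α / K₀ ≤ (ω (t + T)) ^ (-α) - (ω t) ^ (-α) := by
  set b := ω t with hb
  set a := ω (t + T) with ha
  have key : b ^ (1 + α) ≤ K₀ * (b - a) :=
    le_trans (le_max_left _ _) (hdiff t ht)
  have hx : (0:ℝ) < a / b := div_pos h₂ h₁
  -- Bernoulli-type inequality: (a/b)^(-α) ≥ 1 + α*(1 - a/b)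
  have hlog : Real.log (a / b) ≤ a / b - 1 := Real.log_le_sub_one_of_pos hx
  have hexp : (-α) * Real.log (a / b) + 1 ≤ Real.exp ((-α) * Real.log (a / b)) :=
    Real.add_one_le_exp _
  have hX : 1 + α * (1 - a / b) ≤ (a / b) ^ (-α) := by
    rw [Real.rpow_def_of_pos hx]
    have h := Real.add_one_le_exp (Real.log (a / b) * -α)
    have h2 : Real.log (a / b) * α ≤ (a / b - 1) * α :=
      mul_le_mul_of_nonneg_right hlog hα.le
    nlinarith
  have hsplit : (a / b) ^ (-α) = a ^ (-α) / b ^ (-α) :=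
    Real.div_rpow h₂.le h₁.le _
  have hP : (0:ℝ) < b ^ (-α) := Real.rpow_pos_of_pos h₁ _
  have hQ : (0:ℝ) < b ^ (1 + α) := Real.rpow_pos_of_pos h₁ _
  have hPQ : b ^ (-α) * b ^ (1 + α) = b := by
    rw [← Real.rpow_add h₁]
    norm_num
  have hmain : b ^ (-α) * (1 + α * (1 - a / b)) ≤ a ^ (-α) := by
    calc b ^ (-α) * (1 + α * (1 - a / b)) ≤ b ^ (-α) * ((a / b) ^ (-α)) := by
          exact mul_le_mul_of_nonneg_left hX hP.le
      _ = a ^ (-α) := by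
          rw [hsplit]; field_simp
  -- Now: b^(-α) * (1 + α*(1 - a/b)) - b^(-α) = α * b^(-α) * (b - a)/b
  have hba : b ^ (1 + α) / K₀ ≤ b - a := (div_le_iff₀ hK₀).mpr (by linarith)
  have hfinal : α / K₀ ≤ b ^ (-α) * (α * (1 - a / b)) := by
    have h1 : 1 - a / b = (b - a) / b := by field_simp
    rw [h1]
    have h2 : b ^ (1 + α) / K₀ / b ≤ (b - a) / b := by gcongr
    calc α / K₀ = b ^ (-α) * (α * (b ^ (1 + α) / K₀ / b)) := by
          field_simp
          linear_combination (-1) * hPQ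
      _ ≤ b ^ (-α) * (α * ((b - a) / b)) := by
          apply mul_le_mul_of_nonneg_left _ hP.le
          exact mul_le_mul_of_nonneg_left h2 hα.le
  nlinarith [hmain, hfinal, hP]
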